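/- arXiv:2210.00189 — 2 statements merged into one kernel-verified Lean document; each statement's English description precedes it below -/
import Mathlib

section
/- Let p, q be probability densities on ℝ^d and T : ℝ^d → ℝ^{d+1} a measurable sufficient-statistic map with ∫ ‖T(x)T(x)ᵀ‖_F² p(x) dx < ∞. Then the spectral norm of the matrix H = (1/2)∫ (p(x)q(x)/(p(x)+q(x))) T(x)T(x)ᵀ dx satisfies ‖H‖₂ ≤ (1/2)·(1 − TV(P,Q))^{1/2}·(∫ ‖T(x)T(x)ᵀ‖_F² p(x) dx)^{1/2}. -/
open MeasureTheory

attribute [local instance] Matrix.normedAddCommGroup Matrix.normedSpace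

/-- Euclidean norm of a vector in ℝ^n. -/
noncomputable def vecNorm {n : ℕ} (v : Fin n → ℝ) : ℝ := Real.sqrt (∑ i, (v i) ^ 2)

/-- Spectral (ℓ²-operator) norm of a real square matrix. -/
noncomputable def specNorm {n : ℕ} (M : Matrix (Fin n) (Fin n) ℝ) : ℝ :=
  sSup {r : ℝ | ∃ v : Fin n → ℝ, vecNorm v = 1 ∧ r = vecNorm (M.mulVec v)}

/-- Frobenius norm of a real square matrix. -/
noncomputable def frobNorm {n : ℕ} (M : Matrix (Fin n) (Fin n) ℝ) : ℝ :=
  Real.sqrt (∑ i, ∑ j, (M i j) ^ 2)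

lemma frobNorm_nonneg {n : ℕ} (M : Matrix (Fin n) (Fin n) ℝ) : 0 ≤ frobNorm M :=
  Real.sqrt_nonneg _

lemma specNorm_le_frobNorm {n : ℕ} (M : Matrix (Fin n) (Fin n) ℝ) :
    specNorm M ≤ frobNorm M := by
  apply Real.sSup_le
  · rintro r ⟨v, hv, rfl⟩
    unfold vecNorm frobNorm
    apply Real.sqrt_le_sqrt
    have hv1 : ∑ j, (v j) ^ 2 = 1 := by
      have := hv
      unfold vecNorm at this
      have h0 : (0:ℝ) ≤ ∑ j, (v j) ^ 2 := Finset.sum_nonneg (fun j _ => sq_nonneg (v j))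
      nlinarith [Real.sq_sqrt h0]
    calc ∑ i, (M.mulVec v i) ^ 2
        ≤ ∑ i, (∑ j, (M i j) ^ 2) * (∑ j, (v j) ^ 2) := by
          apply Finset.sum_le_sum
          intro i _
          have : M.mulVec v i = ∑ j, M i j * v j := by
            simp [Matrix.mulVec, dotProduct]
          rw [this]
          exact Finset.sum_mul_sq_le_sq_mul_sq _ _ _
      _ = ∑ i, ∑ j, (M i j) ^ 2 := by simp [hv1]
  · exact frobNorm_nonneg M

/-- The matrix-to-Euclidean-space linear isometry (as a CLM). -/
noncomputable def matToEuc (n : ℕ) :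
    Matrix (Fin n) (Fin n) ℝ →L[ℝ] EuclideanSpace ℝ (Fin n × Fin n) :=
  LinearMap.toContinuousLinearMap
    { toFun := fun M => (EuclideanSpace.equiv (Fin n × Fin n) ℝ).symm (fun ij => M ij.1 ij.2)
      map_add' := fun M N => rfl
      map_smul' := fun c M => rfl }

lemma matToEuc_norm {n : ℕ} (M : Matrix (Fin n) (Fin n) ℝ) :
    ‖matToEuc n M‖ = frobNorm M := by
  rw [EuclideanSpace.norm_eq]
  unfold frobNorm
  congr 1
  rw [Fintype.sum_prod_type]
  apply Finset.sum_congr rfl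
  intro i _
  apply Finset.sum_congr rfl
  intro j _
  have : (matToEuc n M) (i, j) = M i j := rfl
  rw [this, Real.norm_eq_abs, sq_abs]

example : True := trivial

theorem nce_hessian_spectral_norm_bound (d : ℕ)
    (p q : (Fin d → ℝ) → ℝ) (T : (Fin d → ℝ) → Fin (d + 1) → ℝ)
    (hp0 : ∀ x, 0 ≤ p x) (hq0 : ∀ x, 0 ≤ q x)
    (hp : Integrable p) (hq : Integrable q)
    (hp1 : ∫ x, p x = 1) (hq1 : ∫ x, q x = 1)
    (hT : Measurable T)
    (hH : @Integrable _ _ SeminormedAddGroup.toContinuousENorm _ _ (fun x =>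
      (p x * q x / (p x + q x)) • Matrix.vecMulVec (T x) (T x)) volume)
    (hFisher : Integrable (fun x => frobNorm (Matrix.vecMulVec (T x) (T x)) ^ 2 * p x))
    (H : Matrix (Fin (d + 1)) (Fin (d + 1)) ℝ)
    (hHdef : H = (1 / 2 : ℝ) •
      ∫ x, (p x * q x / (p x + q x)) • Matrix.vecMulVec (T x) (T x)) :
    specNorm H ≤ (1 / 2) *
      Real.sqrt (1 - (1 / 2) * ∫ x, |p x - q x|) *
      Real.sqrt (∫ x, frobNorm (Matrix.vecMulVec (T x) (T x)) ^ 2 * p x) := by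
  set w : (Fin d → ℝ) → ℝ := fun x => p x * q x / (p x + q x) with hw
  set M : (Fin d → ℝ) → Matrix (Fin (d+1)) (Fin (d+1)) ℝ :=
    fun x => Matrix.vecMulVec (T x) (T x) with hM
  set F : (Fin d → ℝ) → ℝ := fun x => frobNorm (M x) with hF
  set m : (Fin d → ℝ) → ℝ := fun x => min (p x) (q x) with hm
  -- basic nonnegativity
  have hw0 : ∀ x, 0 ≤ w x := fun x =>
    div_nonneg (mul_nonneg (hp0 x) (hq0 x)) (add_nonneg (hp0 x) (hq0 x))
  have hm0 : ∀ x, 0 ≤ m x := fun x => le_min (hp0 x) (hq0 x)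
  have hF0 : ∀ x, 0 ≤ F x := fun x => frobNorm_nonneg _
  have hwm : ∀ x, w x ≤ m x := by
    intro x
    rcases eq_or_lt_of_le (add_nonneg (hp0 x) (hq0 x)) with h | h
    · simp only [hw, hm, ← h]
      have hp' : p x = 0 := by nlinarith [hp0 x, hq0 x]
      simp [hp', hq0 x]
    · rw [hm, le_min_iff]
      constructor
      · rw [div_le_iff₀ h]; nlinarith [hq0 x, hp0 x]
      · rw [div_le_iff₀ h]; nlinarith [hq0 x, hp0 x]
  -- measurability of F
  have hFmeas : Measurable F := by
    have : F = fun x => Real.sqrt (∑ i, ∑ j, (T x i * T x j) ^ 2) := by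
      funext x
      simp [hF, hM, frobNorm, Matrix.vecMulVec_apply]
    rw [this]
    apply (measurable_id.sqrt).comp
    apply Finset.measurable_sum
    intro i _
    apply Finset.measurable_sum
    intro j _
    exact (((measurable_pi_apply i).comp hT).mul ((measurable_pi_apply j).comp hT)).pow_const 2
  -- integrability of m
  have hm_meas : AEStronglyMeasurable m (by volume_tac) :=
    (hp.aemeasurable.min hq.aemeasurable).aestronglyMeasurable
  have hm_int : Integrable m := by
    apply hp.mono hm_meas
    filter_upwards with x
    rw [Real.norm_eq_abs, Real.norm_eq_abs, abs_of_nonneg (hm0 x), abs_of_nonneg (hp0 x)]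
    exact min_le_left _ _
  -- the Fisher integrand, commuted
  have hFisher' : Integrable (fun x => p x * F x ^ 2) := by
    apply hFisher.congr
    filter_upwards with x
    rw [mul_comm]
  -- integral of m
  have hm_int_eq : ∫ x, m x = 1 - (1/2) * ∫ x, |p x - q x| := by
    have habs : Integrable (fun x => |p x - q x|) := (hp.sub hq).abs
    have : m = fun x => (p x + q x - |p x - q x|) / 2 := by
      funext x
      rcases le_total (p x) (q x) with h | h
      · rw [hm]; simp only [min_eq_left h, abs_of_nonpos (by linarith : p x - q x ≤ 0)]; ring
      · rw [hm]; simp only [min_eq_right h, abs_of_nonneg (by linarith : 0 ≤ p x - q x)]; ring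
    have hpq_int : Integrable (fun x => p x + q x) := hp.add hq
    rw [this, integral_div, integral_sub hpq_int habs, integral_add hp hq, hp1, hq1]
    ring
  have hm_int_nonneg : 0 ≤ ∫ x, m x :=
    integral_nonneg fun x => hm0 x
  -- Step A : specNorm ≤ frobNorm, and pull out the 1/2
  have hA : specNorm H ≤ (1/2) * frobNorm (∫ x, w x • M x) := by
    refine (specNorm_le_frobNorm H).trans ?_
    rw [hHdef, ← matToEuc_norm, ← matToEuc_norm, _root_.map_smul, norm_smul]
    norm_num
    exact le_rfl
  -- Step B : frobNorm of the integral ≤ integral of w * F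
  have hB : frobNorm (∫ x, w x • M x) ≤ ∫ x, w x * F x := by
    rw [← matToEuc_norm]
    erw [← ContinuousLinearMap.integral_comp_comm (matToEuc (d + 1)) (φ := fun x => w x • M x) hH]
    refine (norm_integral_le_integral_norm _).trans_eq ?_
    apply integral_congr_ae
    filter_upwards with x
    show ‖matToEuc (d + 1) (w x • M x)‖ = w x * F x
    rw [_root_.map_smul, norm_smul, matToEuc_norm, Real.norm_eq_abs, abs_of_nonneg (hw0 x)]
  -- pointwise bound w * F ≤ √m * (√p * F)
  have hpt : ∀ x, w x * F x ≤ Real.sqrt (m x) * (Real.sqrt (p x) * F x) := by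
    intro x
    have h1 : w x ≤ Real.sqrt (m x) * Real.sqrt (p x) := by
      calc w x ≤ m x := hwm x
        _ = Real.sqrt (m x) * Real.sqrt (m x) := (Real.mul_self_sqrt (hm0 x)).symm
        _ ≤ Real.sqrt (m x) * Real.sqrt (p x) := by
            apply mul_le_mul_of_nonneg_left _ (Real.sqrt_nonneg _)
            exact Real.sqrt_le_sqrt (min_le_left _ _)
    calc w x * F x ≤ (Real.sqrt (m x) * Real.sqrt (p x)) * F x :=
          mul_le_mul_of_nonneg_right h1 (hF0 x)
      _ = Real.sqrt (m x) * (Real.sqrt (p x) * F x) := by ring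
  -- integrability of the majorant
  have hg_meas : AEStronglyMeasurable (fun x => Real.sqrt (p x) * F x) (by volume_tac) :=
    ((measurable_id.sqrt.comp_aemeasurable hp.aemeasurable).mul
      hFmeas.aemeasurable).aestronglyMeasurable
  have hf_meas : AEStronglyMeasurable (fun x => Real.sqrt (m x)) (by volume_tac) :=
    (measurable_id.sqrt.comp_aemeasurable
      (hp.aemeasurable.min hq.aemeasurable)).aestronglyMeasurable
  have hmaj_int : Integrable (fun x => Real.sqrt (m x) * (Real.sqrt (p x) * F x)) := by
    apply Integrable.mono ((hm_int.add hFisher').div_const 2) (hf_meas.mul hg_meas)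
    filter_upwards with x
    simp only [Pi.mul_apply, Pi.add_apply]
    rw [Real.norm_eq_abs, Real.norm_eq_abs]
    have h1 : 0 ≤ Real.sqrt (m x) * (Real.sqrt (p x) * F x) :=
      mul_nonneg (Real.sqrt_nonneg _) (mul_nonneg (Real.sqrt_nonneg _) (hF0 x))
    rw [abs_of_nonneg h1]
    have h2 : (Real.sqrt (m x))^2 = m x := Real.sq_sqrt (hm0 x)
    have h3 : (Real.sqrt (p x) * F x)^2 = p x * F x ^ 2 := by
      rw [mul_pow, Real.sq_sqrt (hp0 x)]
    have h4 := two_mul_le_add_sq (Real.sqrt (m x)) (Real.sqrt (p x) * F x)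
    have h5 : 0 ≤ (m x + p x * F x ^ 2) / 2 := by
      have := mul_nonneg (hp0 x) (sq_nonneg (F x)); have := hm0 x; linarith
    rw [abs_of_nonneg h5]
    nlinarith [h4, h2, h3]
  -- Step C : integral mono
  have hC : ∫ x, w x * F x ≤ ∫ x, Real.sqrt (m x) * (Real.sqrt (p x) * F x) := by
    apply integral_mono_of_nonneg ?_ hmaj_int ?_
    · filter_upwards with x; exact mul_nonneg (hw0 x) (hF0 x)
    · filter_upwards with x; exact hpt x
  -- Step D : Cauchy–Schwarz (Hölder with p = q = 2)
  have hD : ∫ x, Real.sqrt (m x) * (Real.sqrt (p x) * F x) ≤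
      Real.sqrt (∫ x, m x) * Real.sqrt (∫ x, F x ^ 2 * p x) := by
    have hpq : Real.HolderConjugate 2 2 := Real.HolderConjugate.two_two
    have hsqf : (fun x => (Real.sqrt (m x)) ^ 2) = m := by
      funext x; exact Real.sq_sqrt (hm0 x)
    have hsqg : (fun x => (Real.sqrt (p x) * F x) ^ 2) = fun x => p x * F x ^ 2 := by
      funext x; rw [mul_pow, Real.sq_sqrt (hp0 x)]
    have hf : MemLp (fun x => Real.sqrt (m x)) (ENNReal.ofReal 2) (by volume_tac) := by
      rw [show ENNReal.ofReal 2 = 2 by norm_num]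
      rw [memLp_two_iff_integrable_sq hf_meas, hsqf]
      exact hm_int
    have hg : MemLp (fun x => Real.sqrt (p x) * F x) (ENNReal.ofReal 2) (by volume_tac) := by
      rw [show ENNReal.ofReal 2 = 2 by norm_num]
      rw [memLp_two_iff_integrable_sq hg_meas, hsqg]
      exact hFisher'
    have := integral_mul_le_Lp_mul_Lq_of_nonneg hpq
      (ae_of_all _ fun x => Real.sqrt_nonneg (m x))
      (ae_of_all _ fun x => mul_nonneg (Real.sqrt_nonneg _) (hF0 x)) hf hg
    refine this.trans_eq ?_
    have e2 : ∀ f : (Fin d → ℝ) → ℝ, (∫ x, f x ^ (2:ℝ)) = ∫ x, f x ^ 2 := by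
      intro f
      apply integral_congr_ae
      filter_upwards with x
      rw [show (2:ℝ) = ((2:ℕ):ℝ) by norm_num, Real.rpow_natCast]
    rw [e2, e2, hsqf, hsqg]
    rw [← Real.sqrt_eq_rpow, ← Real.sqrt_eq_rpow]
    congr 1
    apply congrArg
    apply integral_congr_ae
    filter_upwards with x
    rw [mul_comm]
  -- combine
  calc specNorm H ≤ (1/2) * frobNorm (∫ x, w x • M x) := hA
    _ ≤ (1/2) * (Real.sqrt (∫ x, m x) * Real.sqrt (∫ x, F x ^ 2 * p x)) := by
        have := (hB.trans hC).trans hD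
        linarith
    _ = (1/2) * Real.sqrt (1 - (1/2) * ∫ x, |p x - q x|) *
          Real.sqrt (∫ x, F x ^ 2 * p x) := by
        rw [hm_int_eq]; ring
end

section
/- If X is a chi-squared random variable with d ≥ 4 degrees of freedom, then for every t ≥ 4, P(X ≥ 2td) ≤ exp(−t). -/
open MeasureTheory ProbabilityTheory
open scoped ENNReal

theorem chi_squared_tail_bound (d : ℕ) (hd : 4 ≤ d) (t : ℝ) (ht : 4 ≤ t) :
    gammaMeasure (d / 2 : ℝ) (1 / 2) {x : ℝ | 2 * t * d ≤ x} ≤ ENNReal.ofReal (Real.exp (-t)) := by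
  have hd' : (4:ℝ) ≤ (d:ℝ) := by exact_mod_cast hd
  set a : ℝ := (d : ℝ) / 2 with ha_def
  have ha : 0 < a := by rw [ha_def]; linarith
  set s : ℝ := 2 * t * d with hs_def
  have hs : 0 < s := by rw [hs_def]; nlinarith
  set C : ℝ := 2 ^ a * Real.exp (-(s/4)) with hC_def
  have hC0 : 0 ≤ C := by positivity
  have hΓ : 0 < Real.Gamma a := Real.Gamma_pos_of_pos ha
  have hset : {x : ℝ | 2 * t * (d:ℝ) ≤ x} = Set.Ici s := rfl
  rw [hset, gammaMeasure, withDensity_apply _ measurableSet_Ici]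
  have hpoint : ∀ x ∈ Set.Ici s, gammaPDF a (1/2) x ≤
      ENNReal.ofReal C * gammaPDF a (1/4) x := by
    intro x hx
    have hxs : s ≤ x := hx
    have hx0 : 0 < x := lt_of_lt_of_le hs hxs
    rw [gammaPDF_of_nonneg hx0.le, gammaPDF_of_nonneg hx0.le,
      ← ENNReal.ofReal_mul hC0]
    apply ENNReal.ofReal_le_ofReal
    have h1 : (1/2:ℝ)^a = 2^a * (1/4:ℝ)^a := by
      rw [← Real.mul_rpow (by norm_num) (by norm_num)]; norm_num
    have h2 : Real.exp (-(1/2 * x)) ≤ Real.exp (-(s/4)) * Real.exp (-(1/4 * x)) := by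
      rw [← Real.exp_add]
      exact Real.exp_le_exp.2 (by linarith)
    have hxp : 0 ≤ x ^ (a - 1) := Real.rpow_nonneg hx0.le _
    calc (1/2:ℝ)^a / Real.Gamma a * x ^ (a-1) * Real.exp (-(1/2 * x))
        = 2^a * ((1/4:ℝ)^a / Real.Gamma a * x ^ (a-1)) * Real.exp (-(1/2 * x)) := by
          rw [h1]; ring
      _ ≤ 2^a * ((1/4:ℝ)^a / Real.Gamma a * x ^ (a-1)) *
            (Real.exp (-(s/4)) * Real.exp (-(1/4 * x))) := by
          apply mul_le_mul_of_nonneg_left h2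
          positivity
      _ = C * ((1/4:ℝ)^a / Real.Gamma a * x ^ (a-1) * Real.exp (-(1/4 * x))) := by
          rw [hC_def]; ring
  calc ∫⁻ x in Set.Ici s, gammaPDF a (1/2) x
      ≤ ∫⁻ x in Set.Ici s, ENNReal.ofReal C * gammaPDF a (1/4) x := by
        refine setLIntegral_mono ?_ hpoint
        exact ((measurable_gammaPDFReal a (1/4)).ennreal_ofReal).const_mul _
    _ = ENNReal.ofReal C * ∫⁻ x in Set.Ici s, gammaPDF a (1/4) x := lintegral_const_mul _
        ((measurable_gammaPDFReal a (1/4)).ennreal_ofReal)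
    _ ≤ ENNReal.ofReal C * ∫⁻ x, gammaPDF a (1/4) x := by
        gcongr
        exact Measure.restrict_le_self
    _ = ENNReal.ofReal C := by
        rw [lintegral_gammaPDF_eq_one ha (by norm_num), mul_one]
    _ ≤ ENNReal.ofReal (Real.exp (-t)) := by
        apply ENNReal.ofReal_le_ofReal
        rw [hC_def, Real.rpow_def_of_pos (by norm_num : (0:ℝ) < 2), ← Real.exp_add]
        apply Real.exp_le_exp.2
        have hlog2 : Real.log 2 < 0.6931471808 := Real.log_two_lt_d9
        rw [ha_def, hs_def]
        nlinarith [mul_nonneg (sub_nonneg.2 ht) (sub_nonneg.2 hd')]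
end
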